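/- arXiv:2309.13284 — 3 statements merged into one kernel-verified Lean document; each statement's English description precedes it below -/
import Mathlib

section
/- Let n ≥ 2 be a positive integer and R = F_1 × ⋯ × F_n, where each F_i is a field. Then two distinct non-trivial ideals I and J of R are mutually maximally distant in G(R) if and only if I ∩ J = 0, i.e., if and only if I and J are not adjacent in G(R). (Equivalently, the strong resolving graph G(R)_SR is the complement of G(R).) -/
open SimpleGraph

/-- The type of non-trivial ideals of a commutative ring `R`
(ideals `I` with `I ≠ 0` and `I ≠ R`). -/
abbrev NontrivialIdeal (R : Type*) [CommRing R] : Type _ :=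
  {I : Ideal R // I ≠ ⊥ ∧ I ≠ ⊤}

/-- The intersection graph of ideals of `R`: vertices are the non-trivial ideals,
and distinct vertices are adjacent iff their intersection is non-zero. -/
def intersectionGraph (R : Type*) [CommRing R] : SimpleGraph (NontrivialIdeal R) where
  Adj I J := I ≠ J ∧ I.1 ⊓ J.1 ≠ ⊥
  symm := ⟨fun I J h => ⟨h.1.symm, by rw [inf_comm]; exact h.2⟩⟩
  loopless := ⟨fun I h => h.1 rfl⟩

/-- Two distinct vertices `u, v` are mutually maximally distant if
`d(v,w) ≤ d(u,v)` for every neighbour `w` of `u` and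
`d(u,w) ≤ d(u,v)` for every neighbour `w` of `v`. -/
def MutuallyMaximallyDistant {V : Type*} (G : SimpleGraph V) (u v : V) : Prop :=
  u ≠ v ∧ (∀ w, G.Adj u w → G.edist v w ≤ G.edist u v) ∧
    (∀ w, G.Adj v w → G.edist u w ≤ G.edist u v)

theorem MutuallyMaximallyDistant.symm {V : Type*} {G : SimpleGraph V} {u v : V}
    (h : MutuallyMaximallyDistant G u v) : MutuallyMaximallyDistant G v u :=
  ⟨h.1.symm,
    fun w hw => by rw [show G.edist v u = G.edist u v from G.edist_comm]; exact h.2.2 w hw,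
    fun w hw => by rw [show G.edist v u = G.edist u v from G.edist_comm]; exact h.2.1 w hw⟩

/-- The strong resolving graph of `G`: `u` and `v` are adjacent iff they are
mutually maximally distant. -/
def strongResolvingGraph {V : Type*} (G : SimpleGraph V) : SimpleGraph V where
  Adj := MutuallyMaximallyDistant G
  symm := ⟨fun _ _ h => h.symm⟩
  loopless := ⟨fun _ h => h.1 rfl⟩

/-- A vertex `w` strongly resolves `u` and `v` if `d(w,u) = d(w,v) + d(v,u)` or
`d(w,v) = d(w,u) + d(u,v)`. A set `W` is a strong resolving set if every two distinct
vertices are strongly resolved by some member of `W`. -/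
def IsStrongResolvingSet {V : Type*} (G : SimpleGraph V) (W : Set V) : Prop :=
  ∀ u v : V, u ≠ v → ∃ w ∈ W,
    G.edist w u = G.edist w v + G.edist v u ∨ G.edist w v = G.edist w u + G.edist u v

/-- The product ideal which is `Rᵢ` in the components where `I` is zero and `0` elsewhere. -/
def complIdeal {ι : Type*} (F : ι → Type*) [∀ i, CommRing (F i)] (I : Ideal (∀ i, F i)) :
    Ideal (∀ i, F i) where
  carrier := {x | ∀ i, I.map (Pi.evalRingHom F i) ≠ ⊥ → x i = 0}
  zero_mem' := fun i _ => rfl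
  add_mem' := fun hx hy i hi => by
    simp only [Pi.add_apply, hx i hi, hy i hi, add_zero]
  smul_mem' := fun c x hx i hi => by
    simp only [Pi.smul_apply, smul_eq_mul, Pi.mul_apply, hx i hi, mul_zero]



section Supp
variable {n : ℕ} {F : Fin n → Type*} [∀ i, Field (F i)]

/-- The support of an ideal in a product of fields. -/
def idealSupp (I : Ideal (∀ i, F i)) : Set (Fin n) :=
  {i | I.map (Pi.evalRingHom F i) ≠ ⊥}

lemma exists_of_mem_idealSupp {I : Ideal (∀ i, F i)} {i : Fin n} (hi : i ∈ idealSupp I) :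
    ∃ y ∈ I, y i ≠ 0 := by
  by_contra h
  push_neg at h
  exact hi (Ideal.map_eq_bot_iff_le_ker _ |>.mpr fun y hy => h y hy)

lemma single_mem_of_mem_idealSupp {I : Ideal (∀ i, F i)} {i : Fin n} (hi : i ∈ idealSupp I)
    (c : F i) : Pi.single i c ∈ I := by
  obtain ⟨y, hy, hyi⟩ := exists_of_mem_idealSupp hi
  have h : Pi.single i c = Pi.single i (c * (y i)⁻¹) * y := by
    funext j
    by_cases hj : j = i
    · subst hj
      simp [mul_assoc, inv_mul_cancel₀ hyi]
    · simp [Pi.single_eq_of_ne hj]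
  rw [h]
  exact I.mul_mem_left _ hy

lemma mem_iff_idealSupp {I : Ideal (∀ i, F i)} {x : ∀ i, F i} :
    x ∈ I ↔ ∀ i ∉ idealSupp I, x i = 0 := by
  constructor
  · intro hx i hi
    simp only [idealSupp, Set.mem_setOf_eq, not_not] at hi
    have h : x i ∈ I.map (Pi.evalRingHom F i) := Ideal.mem_map_of_mem _ hx
    rwa [hi, Ideal.mem_bot] at h
  · intro hx
    have hx2 : x = ∑ j, Pi.single j (x j) := by
      funext i
      rw [Finset.sum_apply, Fintype.sum_pi_single]
    rw [hx2]
    refine Ideal.sum_mem _ fun i _ => ?_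
    by_cases h : x i = 0
    · simp [h]
    · have hi : i ∈ idealSupp I := by
        by_contra h'
        exact h (hx i h')
      exact single_mem_of_mem_idealSupp hi _

lemma idealSupp_injOn {I J : Ideal (∀ i, F i)} (h : idealSupp I = idealSupp J) : I = J := by
  ext x
  rw [mem_iff_idealSupp, mem_iff_idealSupp, h]

lemma idealSupp_nonempty {I : Ideal (∀ i, F i)} (h : I ≠ ⊥) : (idealSupp I).Nonempty := by
  rw [Set.nonempty_iff_ne_empty]
  intro he
  apply h
  refine (Submodule.eq_bot_iff _).mpr fun x hx => ?_
  funext i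
  exact mem_iff_idealSupp.mp hx i (by simp [he])

lemma idealSupp_ne_univ {I : Ideal (∀ i, F i)} (h : I ≠ ⊤) : idealSupp I ≠ Set.univ := by
  intro he
  apply h
  rw [Ideal.eq_top_iff_one]
  exact mem_iff_idealSupp.mpr fun i hi => absurd (he ▸ Set.mem_univ i) hi

lemma inf_eq_bot_iff_idealSupp {I J : Ideal (∀ i, F i)} :
    I ⊓ J = ⊥ ↔ idealSupp I ∩ idealSupp J = ∅ := by
  constructor
  · intro h
    rw [Set.eq_empty_iff_forall_notMem]
    rintro i ⟨hi1, hi2⟩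
    have hm : Pi.single i (1 : F i) ∈ I ⊓ J :=
      ⟨single_mem_of_mem_idealSupp hi1 1, single_mem_of_mem_idealSupp hi2 1⟩
    rw [h, Ideal.mem_bot] at hm
    have := congrFun hm i
    simp at this
  · intro h
    refine (Submodule.eq_bot_iff _).mpr fun x hx => ?_
    funext i
    by_cases hi : i ∈ idealSupp I
    · have hij : i ∉ idealSupp J := fun hj =>
        Set.eq_empty_iff_forall_notMem.mp h i ⟨hi, hj⟩
      exact mem_iff_idealSupp.mp hx.2 i hij
    · exact mem_iff_idealSupp.mp hx.1 i hi

/-- The ideal with a given support set. -/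
def piIdeal (s : Set (Fin n)) : Ideal (∀ i, F i) where
  carrier := {x | ∀ i ∉ s, x i = 0}
  zero_mem' := fun i _ => rfl
  add_mem' := fun hx hy i hi => by
    simp only [Pi.add_apply, hx i hi, hy i hi, add_zero]
  smul_mem' := fun c x hx i hi => by
    simp only [Pi.smul_apply, smul_eq_mul, Pi.mul_apply, hx i hi, mul_zero]

lemma mem_piIdeal {s : Set (Fin n)} {x : ∀ i, F i} :
    x ∈ piIdeal s ↔ ∀ i ∉ s, x i = 0 := Iff.rfl

lemma single_mem_piIdeal {s : Set (Fin n)} {i : Fin n} (hi : i ∈ s) (c : F i) :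
    Pi.single i c ∈ piIdeal s := by
  intro j hj
  exact Pi.single_eq_of_ne (fun e => hj (by rw [e]; exact hi)) c

lemma idealSupp_piIdeal (s : Set (Fin n)) : idealSupp (piIdeal (F := F) s) = s := by
  ext i
  constructor
  · intro hi
    by_contra h
    apply hi
    exact (Ideal.map_eq_bot_iff_le_ker _).mpr fun x hx => hx i h
  · intro hi h
    have h1 : (1 : F i) ∈ (piIdeal s).map (Pi.evalRingHom F i) := by
      have := Ideal.mem_map_of_mem (Pi.evalRingHom F i) (single_mem_piIdeal hi (1 : F i))
      simpa using this
    rw [h, Ideal.mem_bot] at h1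
    exact one_ne_zero h1

lemma piIdeal_ne_bot {s : Set (Fin n)} (hs : s.Nonempty) : (piIdeal s : Ideal (∀ i, F i)) ≠ ⊥ := by
  obtain ⟨i, hi⟩ := hs
  intro h
  have hm := single_mem_piIdeal (F := F) hi (1 : F i)
  rw [h, Ideal.mem_bot] at hm
  have := congrFun hm i
  simp at this

lemma piIdeal_ne_top {s : Set (Fin n)} (hs : s ≠ Set.univ) :
    (piIdeal s : Ideal (∀ i, F i)) ≠ ⊤ := by
  obtain ⟨j, hj⟩ : ∃ j, j ∉ s := by
    by_contra h
    push_neg at h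
    exact hs (Set.eq_univ_of_forall h)
  intro h
  have h1 : (1 : ∀ i, F i) ∈ piIdeal s := h ▸ Submodule.mem_top
  exact one_ne_zero (h1 j hj)

end Supp

section Main
open SimpleGraph
variable {n : ℕ} {F : Fin n → Type*} [∀ i, Field (F i)]

lemma igraph_adj_iff {I J : NontrivialIdeal (∀ i, F i)} :
    (intersectionGraph (∀ i, F i)).Adj I J ↔
      I ≠ J ∧ (idealSupp I.1 ∩ idealSupp J.1).Nonempty := by
  constructor
  · rintro ⟨h1, h2⟩
    refine ⟨h1, ?_⟩
    rw [Set.nonempty_iff_ne_empty]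
    exact fun he => h2 (inf_eq_bot_iff_idealSupp.mpr he)
  · rintro ⟨h1, h2⟩
    refine ⟨h1, fun hb => ?_⟩
    rw [inf_eq_bot_iff_idealSupp] at hb
    rw [hb] at h2
    exact Set.not_nonempty_empty h2

lemma vert_ne {I J : NontrivialIdeal (∀ i, F i)} {j : Fin n}
    (h1 : j ∈ idealSupp I.1) (h2 : j ∉ idealSupp J.1) : I ≠ J := fun e => by
  rw [e] at h1
  exact h2 h1

/-- The vertex of the intersection graph with given support. -/
def vtx (s : Set (Fin n)) (h1 : s.Nonempty) (h2 : s ≠ Set.univ) :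
    NontrivialIdeal (∀ i, F i) :=
  ⟨piIdeal s, piIdeal_ne_bot h1, piIdeal_ne_top h2⟩

lemma supp_vtx (s : Set (Fin n)) (h1 : s.Nonempty) (h2 : s ≠ Set.univ) :
    idealSupp (vtx (F := F) s h1 h2).1 = s := idealSupp_piIdeal s

lemma two_le_edist_of_not_adj {V : Type*} {G : SimpleGraph V} {u v : V}
    (h1 : u ≠ v) (h2 : ¬ G.Adj u v) : 2 ≤ G.edist u v := by
  have h0 : G.edist u v ≠ 0 := fun h => h1 (edist_eq_zero_iff.mp h)
  have hone : G.edist u v ≠ 1 := fun h => h2 (edist_eq_one_iff_adj.mp h)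
  have h : (1 : ℕ∞) < G.edist u v :=
    lt_of_le_of_ne (ENat.one_le_iff_ne_zero.mpr h0) (Ne.symm hone)
  exact Order.add_one_le_of_lt h

lemma key_half {I J : NontrivialIdeal (∀ i, F i)} (hIJ : I ≠ J) (hbot : I.1 ⊓ J.1 = ⊥) :
    ∀ w, (intersectionGraph (∀ i, F i)).Adj I w →
      (intersectionGraph (∀ i, F i)).edist J w ≤ (intersectionGraph (∀ i, F i)).edist I J := by
  intro w hw
  set G := intersectionGraph (∀ i, F i) with hG
  have hST : idealSupp I.1 ∩ idealSupp J.1 = ∅ := inf_eq_bot_iff_idealSupp.mp hbot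
  obtain ⟨hwI, hSW⟩ := igraph_adj_iff.mp hw
  have hnadj : ¬ G.Adj I J := fun ha => ha.2 hbot
  have h2 : 2 ≤ G.edist I J := two_le_edist_of_not_adj hIJ hnadj
  by_cases hWT : (idealSupp J.1 ∩ idealSupp w.1).Nonempty
  · -- J and w are adjacent
    have hJw : J ≠ w := by
      rintro rfl
      obtain ⟨i, hiS, hiW⟩ := hSW
      exact Set.eq_empty_iff_forall_notMem.mp hST i ⟨hiS, hiW⟩
    have hadj : G.Adj J w := igraph_adj_iff.mpr ⟨hJw, hWT⟩
    calc G.edist J w = 1 := edist_eq_one_iff_adj.mpr hadj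
    _ ≤ 2 := one_le_two
    _ ≤ G.edist I J := h2
  · rw [Set.not_nonempty_iff_eq_empty] at hWT
    obtain ⟨s, hsS, hsW⟩ := hSW
    obtain ⟨t, htT⟩ := idealSupp_nonempty J.2.1
    have hsT : s ∉ idealSupp J.1 := fun h => Set.eq_empty_iff_forall_notMem.mp hST s ⟨hsS, h⟩
    have htW : t ∉ idealSupp w.1 := fun h => Set.eq_empty_iff_forall_notMem.mp hWT t ⟨htT, h⟩
    by_cases hu : ({s, t} : Set (Fin n)) = Set.univ
    · -- then w = I, contradiction
      exfalso
      apply hwI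
      apply Subtype.ext
      apply idealSupp_injOn
      ext j
      have hj : j ∈ ({s, t} : Set (Fin n)) := hu ▸ Set.mem_univ j
      have htS : t ∉ idealSupp I.1 := fun h =>
        Set.eq_empty_iff_forall_notMem.mp hST t ⟨h, htT⟩
      rcases hj with rfl | hj
      · simp [hsS, hsW]
      · rw [Set.mem_singleton_iff] at hj
        subst hj
        simp [htS, htW]
    · set K := vtx (F := F) {s, t} ⟨s, Set.mem_insert s _⟩ hu with hK
      have hKsupp : idealSupp K.1 = {s, t} := supp_vtx _ _ _
      have htK : t ∈ idealSupp K.1 := by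
        rw [hKsupp]; exact Set.mem_insert_iff.mpr (Or.inr rfl)
      have hsK : s ∈ idealSupp K.1 := by rw [hKsupp]; exact Set.mem_insert s _
      have hJK : G.Adj J K := igraph_adj_iff.mpr ⟨(vert_ne hsK hsT).symm, ⟨t, htT, htK⟩⟩
      have hKw : G.Adj K w := igraph_adj_iff.mpr ⟨vert_ne htK htW, ⟨s, hsK, hsW⟩⟩
      calc G.edist J w ≤ G.edist J K + G.edist K w := G.edist_triangle
      _ = 1 + 1 := by
        rw [edist_eq_one_iff_adj.mpr hJK, edist_eq_one_iff_adj.mpr hKw]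
      _ ≤ G.edist I J := h2

end Main

theorem statement2 (n : ℕ) (hn : 2 ≤ n) (F : Fin n → Type*) [∀ i, Field (F i)]
    (I J : NontrivialIdeal (∀ i, F i)) (hIJ : I ≠ J) :
    (MutuallyMaximallyDistant (intersectionGraph (∀ i, F i)) I J ↔ I.1 ⊓ J.1 = ⊥) ∧
      (MutuallyMaximallyDistant (intersectionGraph (∀ i, F i)) I J ↔
        ¬ (intersectionGraph (∀ i, F i)).Adj I J) := by
  set G := intersectionGraph (∀ i, F i) with hG
  have main : MutuallyMaximallyDistant G I J ↔ I.1 ⊓ J.1 = ⊥ := by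
    constructor
    · intro hmmd
      by_contra hbot
      have hAdj : G.Adj I J := ⟨hIJ, hbot⟩
      have h1 : G.edist I J = 1 := edist_eq_one_iff_adj.mpr hAdj
      have hST : (idealSupp I.1 ∩ idealSupp J.1).Nonempty := (igraph_adj_iff.mp hAdj).2
      obtain ⟨k, hkS, hkT⟩ := hST
      have hSneT : idealSupp I.1 ≠ idealSupp J.1 :=
        fun he => hIJ (Subtype.ext (idealSupp_injOn he))
      by_cases hsub : idealSupp I.1 ⊆ idealSupp J.1
      · -- pick i ∈ T \ S, w = vtx {i}, a neighbour of J far from I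
        have hns : ¬ idealSupp J.1 ⊆ idealSupp I.1 :=
          fun h => hSneT (subset_antisymm hsub h)
        obtain ⟨i, hiT, hiS⟩ := Set.not_subset.mp hns
        have hki : k ≠ i := fun e => hiS (e ▸ hkS)
        have hu : ({i} : Set (Fin n)) ≠ Set.univ :=
          fun h => hki (Set.mem_singleton_iff.mp (h ▸ Set.mem_univ k))
        set w := vtx (F := F) {i} ⟨i, rfl⟩ hu with hw
        have hwsupp : idealSupp w.1 = {i} := supp_vtx _ _ _
        have hiw : i ∈ idealSupp w.1 := by rw [hwsupp]; rfl
        have hkw : k ∉ idealSupp w.1 := by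
          rw [hwsupp]; simpa using hki
        have hadj : G.Adj J w := igraph_adj_iff.mpr
          ⟨vert_ne hkT hkw, ⟨i, hiT, hiw⟩⟩
        have hle := hmmd.2.2 w hadj
        have hIw : I ≠ w := (vert_ne hiw hiS).symm
        have hnadj : ¬ G.Adj I w := by
          intro ha
          obtain ⟨x, hxS, hxw⟩ := (igraph_adj_iff.mp ha).2
          rw [hwsupp, Set.mem_singleton_iff] at hxw
          exact hiS (hxw ▸ hxS)
        have h2 := two_le_edist_of_not_adj hIw hnadj
        rw [h1] at hle
        exact absurd (h2.trans hle) (by norm_num)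
      · obtain ⟨i, hiS, hiT⟩ := Set.not_subset.mp hsub
        have hki : k ≠ i := fun e => hiT (e ▸ hkT)
        have hu : ({i} : Set (Fin n)) ≠ Set.univ :=
          fun h => hki (Set.mem_singleton_iff.mp (h ▸ Set.mem_univ k))
        set w := vtx (F := F) {i} ⟨i, rfl⟩ hu with hw
        have hwsupp : idealSupp w.1 = {i} := supp_vtx _ _ _
        have hiw : i ∈ idealSupp w.1 := by rw [hwsupp]; rfl
        have hkw : k ∉ idealSupp w.1 := by
          rw [hwsupp]; simpa using hki
        have hadj : G.Adj I w := igraph_adj_iff.mpr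
          ⟨vert_ne hkS hkw, ⟨i, hiS, hiw⟩⟩
        have hle := hmmd.2.1 w hadj
        have hJw : J ≠ w := (vert_ne hiw hiT).symm
        have hnadj : ¬ G.Adj J w := by
          intro ha
          obtain ⟨x, hxT, hxw⟩ := (igraph_adj_iff.mp ha).2
          rw [hwsupp, Set.mem_singleton_iff] at hxw
          exact hiT (hxw ▸ hxT)
        have h2 := two_le_edist_of_not_adj hJw hnadj
        rw [h1] at hle
        exact absurd (h2.trans hle) (by norm_num)
    · intro hbot
      refine ⟨hIJ, key_half hIJ hbot, fun w hw => ?_⟩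
      have := key_half hIJ.symm (by rw [inf_comm]; exact hbot) w hw
      rwa [show G.edist J I = G.edist I J from G.edist_comm] at this
  refine ⟨main, main.trans ?_⟩
  constructor
  · intro hbot ha
    exact ha.2 hbot
  · intro hna
    by_contra hbot
    exact hna ⟨hIJ, hbot⟩
end

section
/- Let n ≥ 2 be a positive integer and R = F_1 × ⋯ × F_n, where each F_i is a field. Then the strong metric dimension of G(R) equals 2^n − 2^{n-1} − 1; that is, the minimum cardinality of a strong resolving set of G(R) is 2^n − 2^{n-1} − 1. -/
open SimpleGraph

section Ideals
variable {n : ℕ} (F : Fin n → Type*) [∀ i, Field (F i)]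

/-- The ideal of functions supported in `S`. -/
def idealOf (S : Finset (Fin n)) : Ideal (∀ i, F i) where
  carrier := {x | ∀ i ∉ S, x i = 0}
  zero_mem' := fun i _ => rfl
  add_mem' := fun hx hy i hi => by simp [Pi.add_apply, hx i hi, hy i hi]
  smul_mem' := fun c x hx i hi => by simp [Pi.smul_apply, hx i hi]

lemma mem_idealOf {S : Finset (Fin n)} {x : ∀ i, F i} :
    x ∈ idealOf F S ↔ ∀ i ∉ S, x i = 0 := Iff.rfl

open Classical in
/-- The support of an ideal. -/
noncomputable def suppI (I : Ideal (∀ i, F i)) : Finset (Fin n) :=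
  Finset.univ.filter (fun i => ∃ x ∈ I, x i ≠ 0)

lemma mem_suppI {I : Ideal (∀ i, F i)} {i : Fin n} :
    i ∈ suppI F I ↔ ∃ x ∈ I, x i ≠ 0 := by
  simp [suppI]

lemma single_mem_idealOf {S : Finset (Fin n)} {i : Fin n} (hi : i ∈ S) (c : F i) :
    Pi.single i c ∈ idealOf F S := by
  intro j hj
  exact Pi.single_eq_of_ne (fun h : j = i => hj (h ▸ hi)) c

lemma single_mem_idealOf_iff {S : Finset (Fin n)} {i : Fin n} :
    Pi.single i (1 : F i) ∈ idealOf F S ↔ i ∈ S := by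
  constructor
  · intro h
    by_contra hi
    have := h i hi
    rw [Pi.single_eq_same] at this
    exact one_ne_zero this
  · exact fun hi => single_mem_idealOf F hi 1

lemma idealOf_suppI (I : Ideal (∀ i, F i)) : idealOf F (suppI F I) = I := by
  apply le_antisymm
  · intro y hy
    have hy' : y = ∑ i : Fin n, Pi.single i (y i) := (Finset.univ_sum_single y).symm
    rw [hy']
    apply Ideal.sum_mem
    intro i _
    rcases eq_or_ne (y i) 0 with h0 | h0
    · rw [h0, Pi.single_zero]; exact I.zero_mem
    · have hi : i ∈ suppI F I := by
        by_contra hi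
        exact h0 (hy i hi)
      obtain ⟨x, hxI, hxi⟩ := (mem_suppI F).mp hi
      have : Pi.single i (y i) = Pi.single i (y i * (x i)⁻¹) * x := by
        funext j
        rcases eq_or_ne j i with rfl | hj
        · simp [mul_assoc, inv_mul_cancel₀ hxi]
        · simp [Pi.single_eq_of_ne hj]
      rw [this]
      exact I.mul_mem_left _ hxI
  · intro x hx i hi
    rw [mem_suppI] at hi
    push_neg at hi
    exact hi x hx

lemma idealOf_injective : Function.Injective (idealOf F) := by
  intro S T h
  ext i
  rw [← single_mem_idealOf_iff F (S := S), ← single_mem_idealOf_iff F (S := T), h]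

lemma suppI_idealOf (S : Finset (Fin n)) : suppI F (idealOf F S) = S :=
  idealOf_injective F (idealOf_suppI F (idealOf F S))

lemma idealOf_eq_bot_iff {S : Finset (Fin n)} : idealOf F S = ⊥ ↔ S = ∅ := by
  constructor
  · intro h
    by_contra hS
    obtain ⟨i, hi⟩ := Finset.nonempty_iff_ne_empty.mpr hS
    have h1 : Pi.single i (1 : F i) ∈ idealOf F S := single_mem_idealOf F hi 1
    rw [h, Ideal.mem_bot] at h1
    have := congrFun h1 i
    rw [Pi.single_eq_same] at this
    exact one_ne_zero this
  · rintro rfl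
    ext x
    simp only [mem_idealOf, Ideal.mem_bot, Finset.notMem_empty]
    constructor
    · intro h; funext i; exact h i (by simp)
    · rintro rfl i _; rfl

lemma idealOf_eq_top_iff {S : Finset (Fin n)} : idealOf F S = ⊤ ↔ S = Finset.univ := by
  constructor
  · intro h
    by_contra hS
    obtain ⟨i, hi⟩ : ∃ i, i ∉ S := by
      by_contra hh; push_neg at hh; exact hS (Finset.eq_univ_of_forall hh)
    have h1 : (1 : ∀ i, F i) ∈ idealOf F S := h ▸ Submodule.mem_top
    exact one_ne_zero (h1 i hi)
  · rintro rfl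
    ext x
    simp [mem_idealOf]

lemma idealOf_inf (S T : Finset (Fin n)) :
    idealOf F S ⊓ idealOf F T = idealOf F (S ∩ T) := by
  ext x
  simp only [Submodule.mem_inf, mem_idealOf, Finset.mem_inter, not_and_or]
  constructor
  · rintro ⟨h1, h2⟩ i (hi | hi)
    · exact h1 i hi
    · exact h2 i hi
  · intro h
    exact ⟨fun i hi => h i (Or.inl hi), fun i hi => h i (Or.inr hi)⟩

/-- Vertices of the combinatorial model: nonempty proper subsets of `Fin n`. -/
abbrev PSub (n : ℕ) : Type _ := {S : Finset (Fin n) // S ≠ ∅ ∧ S ≠ Finset.univ}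

noncomputable def vEquiv : PSub n ≃ NontrivialIdeal (∀ i, F i) where
  toFun S := ⟨idealOf F S.1, fun h => S.2.1 ((idealOf_eq_bot_iff F).mp h),
    fun h => S.2.2 ((idealOf_eq_top_iff F).mp h)⟩
  invFun I := ⟨suppI F I.1,
    fun h => I.2.1 (by rw [← idealOf_suppI F I.1, h]; exact (idealOf_eq_bot_iff F).mpr rfl),
    fun h => I.2.2 (by rw [← idealOf_suppI F I.1, h, (idealOf_eq_top_iff F).mpr rfl])⟩
  left_inv S := Subtype.ext (suppI_idealOf F S.1)
  right_inv I := Subtype.ext (idealOf_suppI F I.1)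

open SimpleGraph

variable {F}

lemma eq_of_supp_eq {u v : NontrivialIdeal (∀ i, F i)}
    (h : suppI F u.1 = suppI F v.1) : u = v :=
  Subtype.ext (by rw [← idealOf_suppI F u.1, ← idealOf_suppI F v.1, h])

lemma supp_ne_empty (u : NontrivialIdeal (∀ i, F i)) : suppI F u.1 ≠ ∅ :=
  fun h => u.2.1 (by rw [← idealOf_suppI F u.1, h]; exact (idealOf_eq_bot_iff F).mpr rfl)

lemma supp_ne_univ (u : NontrivialIdeal (∀ i, F i)) : suppI F u.1 ≠ Finset.univ :=
  fun h => u.2.2 (by rw [← idealOf_suppI F u.1, h]; exact (idealOf_eq_top_iff F).mpr rfl)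

lemma adj_iff {u v : NontrivialIdeal (∀ i, F i)} :
    (intersectionGraph (∀ i, F i)).Adj u v ↔ u ≠ v ∧ suppI F u.1 ∩ suppI F v.1 ≠ ∅ := by
  have : u.1 ⊓ v.1 = idealOf F (suppI F u.1 ∩ suppI F v.1) := by
    conv_lhs => rw [← idealOf_suppI F u.1, ← idealOf_suppI F v.1]
    exact idealOf_inf F _ _
  constructor
  · rintro ⟨h1, h2⟩
    exact ⟨h1, fun he => h2 (by rw [this, he]; exact (idealOf_eq_bot_iff F).mpr rfl)⟩
  · rintro ⟨h1, h2⟩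
    exact ⟨h1, fun he => h2 ((idealOf_eq_bot_iff F).mp (this ▸ he))⟩

variable (F) in
noncomputable def vmk (S : Finset (Fin n)) (h : S ≠ ∅ ∧ S ≠ Finset.univ) :
    NontrivialIdeal (∀ i, F i) := vEquiv F ⟨S, h⟩

lemma supp_vmk (S : Finset (Fin n)) (h : S ≠ ∅ ∧ S ≠ Finset.univ) :
    suppI F (vmk F S h).1 = S := suppI_idealOf F S

lemma edist_le_two_of_disjoint (hn3 : 3 ≤ n) (u v : NontrivialIdeal (∀ i, F i))
    (hd : suppI F u.1 ∩ suppI F v.1 = ∅) :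
    (intersectionGraph (∀ i, F i)).edist u v ≤ 2 := by
  obtain ⟨a, ha⟩ := Finset.nonempty_iff_ne_empty.mpr (supp_ne_empty u)
  obtain ⟨b, hb⟩ := Finset.nonempty_iff_ne_empty.mpr (supp_ne_empty v)
  have hab : ({a, b} : Finset (Fin n)) ≠ ∅ := by simp
  have hbu : b ∉ suppI F u.1 := fun hbu =>
    (Finset.notMem_empty b) (hd ▸ Finset.mem_inter.mpr ⟨hbu, hb⟩)
  have hav : a ∉ suppI F v.1 := fun hav =>
    (Finset.notMem_empty a) (hd ▸ Finset.mem_inter.mpr ⟨ha, hav⟩)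
  have habu : ({a, b} : Finset (Fin n)) ≠ Finset.univ := by
    intro h
    have h2 : ({a, b} : Finset (Fin n)).card ≤ 2 := Finset.card_insert_le a {b} |>.trans (by simp)
    rw [h, Finset.card_univ, Fintype.card_fin] at h2
    omega
  set z := vmk F {a, b} ⟨hab, habu⟩ with hz
  have hsz : suppI F z.1 = {a, b} := supp_vmk _ _
  have h1 : (intersectionGraph (∀ i, F i)).Adj u z := by
    rw [adj_iff]
    constructor
    · intro he
      apply hbu; rw [he, hsz]; simp
    · rw [hsz]
      intro he
      apply Finset.notMem_empty a
      rw [← he]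
      exact Finset.mem_inter.mpr ⟨ha, by simp⟩
  have h2 : (intersectionGraph (∀ i, F i)).Adj z v := by
    rw [adj_iff]
    constructor
    · intro he
      apply hav; rw [← he, hsz]; simp
    · rw [hsz]
      intro he
      apply Finset.notMem_empty b
      rw [← he]
      exact Finset.mem_inter.mpr ⟨by simp, hb⟩
  calc (intersectionGraph (∀ i, F i)).edist u v
      ≤ _ + _ := SimpleGraph.edist_triangle (v := z)
    _ ≤ 2 := by
        rw [edist_eq_one_iff_adj.mpr h1, edist_eq_one_iff_adj.mpr h2]
        rfl

lemma three_le_of_distinct {x y z : Fin n} (hxy : x ≠ y) (hxz : x ≠ z) (hyz : y ≠ z) :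
    3 ≤ n := by
  have h3 : ({x, y, z} : Finset (Fin n)).card = 3 := by
    rw [Finset.card_insert_of_notMem (by simp [hxy, hxz]),
      Finset.card_insert_of_notMem (by simp [hyz]), Finset.card_singleton]
  calc 3 = ({x, y, z} : Finset (Fin n)).card := h3.symm
    _ ≤ Finset.univ.card := Finset.card_le_univ _
    _ = n := by rw [Finset.card_univ, Fintype.card_fin]

lemma two_le_edist {u v : NontrivialIdeal (∀ i, F i)} (hne : u ≠ v)
    (hnadj : ¬ (intersectionGraph (∀ i, F i)).Adj u v) :
    2 ≤ (intersectionGraph (∀ i, F i)).edist u v := by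
  have h1 : 1 < (intersectionGraph (∀ i, F i)).edist u v := by
    apply lt_of_le_of_ne
    · exact Order.one_le_iff_pos.mpr (SimpleGraph.edist_pos_of_ne hne)
    · intro h
      exact hnadj (SimpleGraph.edist_eq_one_iff_adj.mp h.symm)
  exact Order.add_one_le_of_lt h1

lemma enat_helper {a b c : ℕ∞} (h : a = b + c) (hb : 1 ≤ b) (hc : 2 ≤ c) (ha : a ≤ 2) :
    False := by
  have h3 : (3 : ℕ∞) ≤ a := by
    rw [h, show (3 : ℕ∞) = 1 + 2 by norm_num]
    exact add_le_add hb hc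
  have := h3.trans ha
  norm_num at this

lemma mem_of_disjoint_supports {W : Set (NontrivialIdeal (∀ i, F i))}
    (hW : IsStrongResolvingSet (intersectionGraph (∀ i, F i)) W)
    {u v : NontrivialIdeal (∀ i, F i)} (hd : suppI F u.1 ∩ suppI F v.1 = ∅) :
    u ∈ W ∨ v ∈ W := by
  set G := intersectionGraph (∀ i, F i) with hG
  have hne : u ≠ v := by
    intro h
    apply supp_ne_empty u
    rw [← hd, h, Finset.inter_self]
  by_contra hcon
  push_neg at hcon
  obtain ⟨w, hwW, hres⟩ := hW u v hne
  have hwu : w ≠ u := fun h => hcon.1 (h ▸ hwW)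
  have hwv : w ≠ v := fun h => hcon.2 (h ▸ hwW)
  have hnadj : ¬ G.Adj u v := by
    rw [hG, adj_iff]
    rintro ⟨-, h⟩
    exact h hd
  have hvu2 : 2 ≤ G.edist v u := by
    rw [SimpleGraph.edist_comm]
    exact two_le_edist hne hnadj
  have huv2 : 2 ≤ G.edist u v := two_le_edist hne hnadj
  have hAS : suppI F w.1 ≠ suppI F u.1 := fun h => hwu (eq_of_supp_eq h)
  have hAT : suppI F w.1 ≠ suppI F v.1 := fun h => hwv (eq_of_supp_eq h)
  have hdisj : ∀ i, i ∈ suppI F u.1 → i ∈ suppI F v.1 → False := by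
    intro i h1 h2
    exact Finset.notMem_empty i (hd ▸ Finset.mem_inter.mpr ⟨h1, h2⟩)
  -- establish 3 ≤ n
  have hmemdiff : ∀ {A B : Finset (Fin n)}, A ≠ B → ∃ c, (c ∈ A ∧ c ∉ B) ∨ (c ∈ B ∧ c ∉ A) := by
    intro A B hAB
    by_contra hc
    push_neg at hc
    exact hAB (Finset.ext fun i => ⟨fun h => (hc i).1 h, fun h => (hc i).2 h⟩)
  obtain ⟨s, hs⟩ := Finset.nonempty_iff_ne_empty.mpr (supp_ne_empty u)
  obtain ⟨t, ht⟩ := Finset.nonempty_iff_ne_empty.mpr (supp_ne_empty v)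
  have hn3 : 3 ≤ n := by
    rcases eq_or_ne (suppI F w.1 ∩ suppI F u.1) ∅ with hASd | hASn
    · have hsA : s ∉ suppI F w.1 := fun h =>
        Finset.notMem_empty s (hASd ▸ Finset.mem_inter.mpr ⟨h, hs⟩)
      rcases eq_or_ne (suppI F w.1 ∩ suppI F v.1) ∅ with hATd | hATn
      · -- a ∈ A, s, t pairwise distinct
        obtain ⟨a, ha⟩ := Finset.nonempty_iff_ne_empty.mpr (supp_ne_empty w)
        have htA : t ∉ suppI F w.1 := fun h =>
          Finset.notMem_empty t (hATd ▸ Finset.mem_inter.mpr ⟨h, ht⟩)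
        exact three_le_of_distinct (x := a) (y := s) (z := t)
          (fun h => hsA (h ▸ ha)) (fun h => htA (h ▸ ha))
          (fun h => hdisj s hs (h ▸ ht))
      · obtain ⟨a2, ha2⟩ := Finset.nonempty_iff_ne_empty.mpr hATn
        rw [Finset.mem_inter] at ha2
        obtain ⟨c, hc⟩ := hmemdiff hAT
        refine three_le_of_distinct (x := a2) (y := s) (z := c) ?_ ?_ ?_
        · exact fun h => hsA (h ▸ ha2.1)
        · rintro rfl
          rcases hc with ⟨-, h2⟩ | ⟨-, h2⟩
          · exact h2 ha2.2
          · exact h2 ha2.1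
        · rintro rfl
          rcases hc with ⟨h1, -⟩ | ⟨h1, -⟩
          · exact hsA h1
          · exact hdisj s hs h1
    · obtain ⟨a1, ha1⟩ := Finset.nonempty_iff_ne_empty.mpr hASn
      rw [Finset.mem_inter] at ha1
      rcases eq_or_ne (suppI F w.1 ∩ suppI F v.1) ∅ with hATd | hATn
      · have htA : t ∉ suppI F w.1 := fun h =>
          Finset.notMem_empty t (hATd ▸ Finset.mem_inter.mpr ⟨h, ht⟩)
        obtain ⟨c, hc⟩ := hmemdiff hAS
        refine three_le_of_distinct (x := a1) (y := t) (z := c) ?_ ?_ ?_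
        · exact fun h => htA (h ▸ ha1.1)
        · rintro rfl
          rcases hc with ⟨-, h2⟩ | ⟨-, h2⟩
          · exact h2 ha1.2
          · exact h2 ha1.1
        · rintro rfl
          rcases hc with ⟨h1, -⟩ | ⟨h1, -⟩
          · exact htA h1
          · exact hdisj t h1 ht
      · obtain ⟨a2, ha2⟩ := Finset.nonempty_iff_ne_empty.mpr hATn
        rw [Finset.mem_inter] at ha2
        obtain ⟨c, hc⟩ : ∃ c, c ∉ suppI F w.1 := by
          by_contra hcc
          push_neg at hcc
          exact supp_ne_univ w (Finset.eq_univ_of_forall hcc)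
        refine three_le_of_distinct (x := a1) (y := a2) (z := c) ?_ ?_ ?_
        · exact fun h => hdisj a1 ha1.2 (h ▸ ha2.2)
        · exact fun h => hc (h ▸ ha1.1)
        · exact fun h => hc (h ▸ ha2.1)
  -- edist bounds
  have hwu2 : G.edist w u ≤ 2 := by
    rcases eq_or_ne (suppI F w.1 ∩ suppI F u.1) ∅ with hASd | hASn
    · exact edist_le_two_of_disjoint hn3 w u hASd
    · have : G.Adj w u := adj_iff.mpr ⟨hwu, hASn⟩
      rw [SimpleGraph.edist_eq_one_iff_adj.mpr this]
      norm_num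
  have hwv2 : G.edist w v ≤ 2 := by
    rcases eq_or_ne (suppI F w.1 ∩ suppI F v.1) ∅ with hATd | hATn
    · exact edist_le_two_of_disjoint hn3 w v hATd
    · have : G.Adj w v := adj_iff.mpr ⟨hwv, hATn⟩
      rw [SimpleGraph.edist_eq_one_iff_adj.mpr this]
      norm_num
  rcases hres with h | h
  · exact enat_helper h (Order.one_le_iff_pos.mpr (SimpleGraph.edist_pos_of_ne hwv)) hvu2 hwu2
  · exact enat_helper h (Order.one_le_iff_pos.mpr (SimpleGraph.edist_pos_of_ne hwu)) huv2 hwv2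

variable (F) in
/-- The witness strong resolving set: vertices whose support avoids `i0`. -/
def W0 (i0 : Fin n) : Set (NontrivialIdeal (∀ i, F i)) :=
  {u | i0 ∉ suppI F u.1}

lemma W0_isSRS (i0 : Fin n) :
    IsStrongResolvingSet (intersectionGraph (∀ i, F i)) (W0 F i0) := by
  set G := intersectionGraph (∀ i, F i) with hG
  intro u v huv
  by_cases hu : u ∈ W0 F i0
  · exact ⟨u, hu, Or.inr (by rw [SimpleGraph.edist_self, zero_add])⟩
  by_cases hv : v ∈ W0 F i0
  · exact ⟨v, hv, Or.inl (by rw [SimpleGraph.edist_self, zero_add])⟩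
  -- i0 ∈ supp u and i0 ∈ supp v
  simp only [W0, Set.mem_setOf_eq, not_not] at hu hv
  have hadj : G.Adj u v := by
    rw [hG, adj_iff]
    exact ⟨huv, fun h => Finset.notMem_empty i0 (h ▸ Finset.mem_inter.mpr ⟨hu, hv⟩)⟩
  have hST : suppI F u.1 ≠ suppI F v.1 := fun h => huv (eq_of_supp_eq h)
  -- wlog-style helper
  have key : ∀ u v : NontrivialIdeal (∀ i, F i), i0 ∈ suppI F u.1 → i0 ∈ suppI F v.1 →
      u ≠ v → (suppI F v.1 \ suppI F u.1) ≠ ∅ →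
      ∃ w ∈ W0 F i0, G.edist w u = 2 ∧ G.edist w v = 1 := by
    clear hu hv huv hadj hST u v
    intro u v hu hv huv hTS
    obtain ⟨b, hb⟩ := Finset.nonempty_iff_ne_empty.mpr hTS
    rw [Finset.mem_sdiff] at hb
    have hbi0 : b ≠ i0 := fun h => hb.2 (h ▸ hu)
    have hn3 : 3 ≤ n := by
      obtain ⟨c, hc⟩ : ∃ c, c ∉ suppI F v.1 := by
        by_contra hcc
        push_neg at hcc
        exact supp_ne_univ v (Finset.eq_univ_of_forall hcc)
      exact three_le_of_distinct (x := i0) (y := b) (z := c)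
        (Ne.symm hbi0) (fun h => hc (h ▸ hv)) (fun h => hc (h ▸ hb.1))
    have hTSne : (suppI F v.1 \ suppI F u.1) ≠ Finset.univ := by
      intro h
      have : i0 ∈ suppI F v.1 \ suppI F u.1 := h ▸ Finset.mem_univ i0
      exact (Finset.mem_sdiff.mp this).2 hu
    set w := vmk F (suppI F v.1 \ suppI F u.1) ⟨hTS, hTSne⟩ with hw
    have hsw : suppI F w.1 = suppI F v.1 \ suppI F u.1 := supp_vmk _ _
    have hwmem : w ∈ W0 F i0 := by
      simp only [W0, Set.mem_setOf_eq, hsw, Finset.mem_sdiff]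
      rintro ⟨-, h⟩
      exact h hu
    have hwv : G.Adj w v := by
      rw [adj_iff]
      constructor
      · intro h
        rw [h] at hsw
        rw [hsw] at hv
        exact (Finset.mem_sdiff.mp hv).2 hu
      · intro h
        apply Finset.notMem_empty b
        rw [← h, hsw]
        exact Finset.mem_inter.mpr ⟨Finset.mem_sdiff.mpr hb, hb.1⟩
    have hwune : w ≠ u := by
      intro h
      rw [h] at hsw
      obtain ⟨s, hs⟩ := Finset.nonempty_iff_ne_empty.mpr (supp_ne_empty u)
      exact (Finset.mem_sdiff.mp (hsw ▸ hs)).2 hs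
    have hwunadj : ¬ G.Adj w u := by
      rw [adj_iff]
      rintro ⟨-, h⟩
      apply h
      rw [hsw]
      ext i
      simp only [Finset.mem_inter, Finset.mem_sdiff, Finset.notMem_empty, iff_false]
      rintro ⟨⟨-, h2⟩, h3⟩
      exact h2 h3
    refine ⟨w, hwmem, ?_, SimpleGraph.edist_eq_one_iff_adj.mpr hwv⟩
    apply le_antisymm
    · apply edist_le_two_of_disjoint hn3
      rw [hsw]
      ext i
      simp only [Finset.mem_inter, Finset.mem_sdiff, Finset.notMem_empty, iff_false]
      rintro ⟨⟨-, h2⟩, h3⟩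
      exact h2 h3
    · exact two_le_edist hwune hwunadj
  rcases eq_or_ne (suppI F v.1 \ suppI F u.1) ∅ with hTS | hTS
  · -- then supp u \ supp v ≠ ∅; use key with roles swapped
    have hSTd : (suppI F u.1 \ suppI F v.1) ≠ ∅ := by
      intro h
      apply hST
      apply Finset.Subset.antisymm
      · intro i hi
        by_contra hi'
        exact Finset.notMem_empty i (h ▸ Finset.mem_sdiff.mpr ⟨hi, hi'⟩)
      · intro i hi
        by_contra hi'
        exact Finset.notMem_empty i (hTS ▸ Finset.mem_sdiff.mpr ⟨hi, hi'⟩)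
    obtain ⟨w, hwmem, hw2, hw1⟩ := key v u hv hu (Ne.symm huv) hSTd
    refine ⟨w, hwmem, Or.inr ?_⟩
    rw [hw2, hw1, SimpleGraph.edist_eq_one_iff_adj.mpr hadj]
    rfl
  · obtain ⟨w, hwmem, hw2, hw1⟩ := key u v hu hv huv hTS
    refine ⟨w, hwmem, Or.inl ?_⟩
    rw [hw2, hw1, SimpleGraph.edist_eq_one_iff_adj.mpr hadj.symm]
    rfl

lemma card_psub (hn : 1 ≤ n) : Nat.card (PSub n) = 2 ^ n - 2 := by
  rw [Nat.card_eq_fintype_card, Fintype.card_subtype]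
  have : Finset.univ.filter (fun S : Finset (Fin n) => S ≠ ∅ ∧ S ≠ Finset.univ)
      = Finset.univ \ {∅, Finset.univ} := by
    ext S
    simp only [Finset.mem_filter, Finset.mem_univ, true_and, Finset.mem_sdiff,
      Finset.mem_insert, Finset.mem_singleton, not_or]
  have hne : (∅ : Finset (Fin n)) ≠ Finset.univ := by
    intro h
    have : (⟨0, by omega⟩ : Fin n) ∈ (∅ : Finset (Fin n)) := by
      rw [h]; exact Finset.mem_univ _
    simp at this
  have hcard2 : ({∅, Finset.univ} : Finset (Finset (Fin n))).card = 2 := by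
    rw [Finset.card_insert_of_notMem (by simpa using hne), Finset.card_singleton]
  rw [this, Finset.card_sdiff_of_subset (Finset.subset_univ _), Finset.card_univ, Fintype.card_finset,
    Fintype.card_fin, hcard2]

lemma card_vertices (hn : 1 ≤ n) : Nat.card (NontrivialIdeal (∀ i, F i)) = 2 ^ n - 2 := by
  rw [← card_psub hn]
  exact Nat.card_congr (vEquiv F).symm

variable (F) in
noncomputable def cmpl (u : NontrivialIdeal (∀ i, F i)) : NontrivialIdeal (∀ i, F i) :=
  vmk F (suppI F u.1)ᶜ
    ⟨fun h => supp_ne_univ u (by rwa [Finset.compl_eq_empty_iff] at h),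
     fun h => supp_ne_empty u (by rwa [Finset.compl_eq_univ_iff] at h)⟩

lemma supp_cmpl (u : NontrivialIdeal (∀ i, F i)) :
    suppI F (cmpl F u).1 = (suppI F u.1)ᶜ := supp_vmk _ _

lemma cmpl_injective : Function.Injective (cmpl F) := by
  intro u v h
  apply eq_of_supp_eq
  have := congrArg (fun x => suppI F x.1) h
  simp only [supp_cmpl] at this
  exact compl_injective this

lemma intersecting_bound (hn : 1 ≤ n) (A : Set (NontrivialIdeal (∀ i, F i)))
    (hA : ∀ u ∈ A, ∀ v ∈ A, suppI F u.1 ∩ suppI F v.1 ≠ ∅) :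
    A.ncard ≤ 2 ^ (n - 1) - 1 := by
  haveI : Finite (NontrivialIdeal (∀ i, F i)) := Finite.of_equiv _ (vEquiv F)
  have hdisj : Disjoint A (cmpl F '' A) := by
    rw [Set.disjoint_left]
    rintro x hx ⟨y, hy, rfl⟩
    apply hA _ hx _ hy  -- (cmpl y) ∈ A, y ∈ A
    rw [supp_cmpl]
    ext i
    simp only [Finset.mem_inter, Finset.mem_compl, Finset.notMem_empty, iff_false, not_and]
    exact fun h1 h2 => h1 h2
  have hcard : (A ∪ cmpl F '' A).ncard = A.ncard + (cmpl F '' A).ncard :=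
    Set.ncard_union_eq hdisj (Set.toFinite _) (Set.toFinite _)
  have himg : (cmpl F '' A).ncard = A.ncard :=
    Set.ncard_image_of_injective _ cmpl_injective
  have hle : (A ∪ cmpl F '' A).ncard ≤ 2 ^ n - 2 := by
    rw [← card_vertices (F := F) hn, ← Set.ncard_univ]
    exact Set.ncard_le_ncard (Set.subset_univ _) (Set.toFinite _)
  have hpow : 2 ^ n = 2 ^ (n - 1) * 2 := by
    rw [← pow_succ]
    congr 1
    omega
  have h1 : 1 ≤ 2 ^ (n - 1) := Nat.one_le_two_pow
  omega

lemma card_W0 (hn : 1 ≤ n) (i0 : Fin n) : (W0 F i0).ncard = 2 ^ (n - 1) - 1 := by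
  haveI : Finite (NontrivialIdeal (∀ i, F i)) := Finite.of_equiv _ (vEquiv F)
  have e2 : {S : Finset (Fin n) // (S ≠ ∅ ∧ S ≠ Finset.univ) ∧ i0 ∉ S} ≃ ↥(W0 F i0) :=
    { toFun := fun S => ⟨vmk F S.1 S.2.1, by
        simp only [W0, Set.mem_setOf_eq, supp_vmk]
        exact S.2.2⟩
      invFun := fun u => ⟨suppI F u.1.1, ⟨⟨supp_ne_empty _, supp_ne_univ _⟩, u.2⟩⟩
      left_inv := fun S => Subtype.ext (supp_vmk _ _)
      right_inv := fun u => Subtype.ext (Subtype.ext (idealOf_suppI F u.1.1)) }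
  rw [← Nat.card_coe_set_eq, ← Nat.card_congr e2, Nat.card_eq_fintype_card,
    Fintype.card_subtype]
  have : Finset.univ.filter (fun S : Finset (Fin n) => (S ≠ ∅ ∧ S ≠ Finset.univ) ∧ i0 ∉ S)
      = ((Finset.univ.erase i0).powerset).erase ∅ := by
    ext S
    simp only [Finset.mem_filter, Finset.mem_univ, true_and, Finset.mem_erase,
      Finset.mem_powerset, Finset.subset_erase, Finset.subset_univ]
    constructor
    · rintro ⟨⟨h1, h2⟩, h3⟩
      exact ⟨h1, h3⟩
    · rintro ⟨h1, h3⟩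
      exact ⟨⟨h1, fun h => h3 (h ▸ Finset.mem_univ i0)⟩, h3⟩
  rw [this, Finset.card_erase_of_mem (Finset.empty_mem_powerset _), Finset.card_powerset,
    Finset.card_erase_of_mem (Finset.mem_univ _), Finset.card_univ, Fintype.card_fin]

end Ideals

theorem statement5 (n : ℕ) (hn : 2 ≤ n) (F : Fin n → Type*) [∀ i, Field (F i)] :
    IsLeast {k : ℕ | ∃ W : Set (NontrivialIdeal (∀ i, F i)), W.Finite ∧
        IsStrongResolvingSet (intersectionGraph (∀ i, F i)) W ∧ W.ncard = k}
      (2 ^ n - 2 ^ (n - 1) - 1) := by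
  haveI : Finite (NontrivialIdeal (∀ i, F i)) := Finite.of_equiv _ (vEquiv F)
  set i0 : Fin n := ⟨0, by omega⟩
  have hpow : 2 ^ n = 2 ^ (n - 1) * 2 := by
    rw [← pow_succ]
    congr 1
    omega
  have h1 : 1 ≤ 2 ^ (n - 1) := Nat.one_le_two_pow
  have hgoal : 2 ^ n - 2 ^ (n - 1) - 1 = 2 ^ (n - 1) - 1 := by omega
  constructor
  · exact ⟨W0 F i0, Set.toFinite _, W0_isSRS i0,
      by rw [card_W0 (by omega) i0, hgoal]⟩
  · rintro k ⟨W, hWfin, hWsrs, rfl⟩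
    have hcompl : ∀ u ∈ Wᶜ, ∀ v ∈ Wᶜ, suppI F u.1 ∩ suppI F v.1 ≠ ∅ := by
      intro u hu v hv h
      rcases mem_of_disjoint_supports hWsrs h with h' | h'
      · exact hu h'
      · exact hv h'
    have hb := intersecting_bound (by omega) Wᶜ hcompl
    have htot : W.ncard + Wᶜ.ncard = 2 ^ n - 2 := by
      rw [← card_vertices (F := F) (by omega)]
      exact Set.ncard_add_ncard_compl W
    omega
end

section
/- Let m ≥ 2 be a positive integer and R = R_1 × ⋯ × R_m, where each R_i is a commutative Artinian local principal ideal ring that is not a field with exactly n_i non-trivial ideals. Let A_0 be the set of non-trivial ideals I = I_1 × ⋯ × I_m of R with I_i ≠ 0 for every i. Then |A_0| = ∏_{i=1}^m (n_i + 1) − 1, any two distinct members of A_0 are mutually maximally distant in G(R), and no member of A_0 is mutually maximally distant from any non-trivial ideal outside A_0. -/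
open SimpleGraph

/- ### Auxiliary lemmas -/

section Chain
variable {S : Type*} [CommRing S] [IsArtinianRing S] [IsLocalRing S] [IsPrincipalIdealRing S]

lemma chain_dvd_or_dvd (a b : S) : a ∣ b ∨ b ∣ a := by
  obtain ⟨π, hπ⟩ := (IsPrincipalIdealRing.principal (IsLocalRing.maximalIdeal S)).1
  obtain ⟨n, hn⟩ := IsArtinianRing.isNilpotent_jacobson_bot (R := S)
  rw [IsLocalRing.jacobson_eq_maximalIdeal ⊥ bot_ne_top] at hn
  have key : ∀ j : ℕ, ∀ a b : S, a ∉ (IsLocalRing.maximalIdeal S) ^ j → a ∣ b ∨ b ∣ a := by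
    intro j
    induction j with
    | zero => intro a b ha; exact absurd (by simp) ha
    | succ j ih =>
      intro a b ha
      by_cases hb : IsUnit b
      · exact Or.inr hb.dvd
      by_cases hau : IsUnit a
      · exact Or.inl hau.dvd
      have haM : a ∈ IsLocalRing.maximalIdeal S := hau
      have hbM : b ∈ IsLocalRing.maximalIdeal S := hb
      rw [hπ, Ideal.submodule_span_eq, Ideal.mem_span_singleton'] at haM hbM
      obtain ⟨a', rfl⟩ := haM
      obtain ⟨b', rfl⟩ := hbM
      have ha' : a' ∉ (IsLocalRing.maximalIdeal S) ^ j := by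
        intro h
        apply ha
        rw [pow_succ]
        exact Ideal.mul_mem_mul h
          (by rw [hπ, Ideal.submodule_span_eq]; exact Ideal.mem_span_singleton_self π)
      rcases ih a' b' ha' with h | h
      · exact Or.inl (mul_dvd_mul_right h π)
      · exact Or.inr (mul_dvd_mul_right h π)
  by_cases ha : a = 0
  · exact Or.inr ⟨0, by simp [ha]⟩
  · refine key n a b ?_
    intro h
    rw [hn] at h
    exact ha (by simpa using h)

end Chain

section Prod
variable {m : ℕ} {R : Fin m → Type*} [∀ i, CommRing (R i)]

lemma eval_surjective (i : Fin m) : Function.Surjective (Pi.evalRingHom R i) :=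
  fun y => ⟨Pi.single i y, Pi.single_eq_same i y⟩

lemma mem_map_iff {I : Ideal (∀ i, R i)} {i : Fin m} {a : R i} :
    a ∈ I.map (Pi.evalRingHom R i) ↔ ∃ x ∈ I, x i = a := by
  rw [Ideal.mem_map_iff_of_surjective _ (eval_surjective i)]
  rfl

lemma single_mul_eq (i : Fin m) (c : R i) (x : ∀ j, R j) :
    Pi.single i c * x = Pi.single i (c * x i) := by
  funext j
  by_cases h : j = i
  · subst h; simp
  · simp [Pi.single_apply, h]

lemma single_mem {I : Ideal (∀ i, R i)} {i : Fin m} {x : ∀ j, R j} (hx : x ∈ I) (c : R i) :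
    Pi.single i (c * x i) ∈ I := by
  rw [← single_mul_eq]
  exact I.mul_mem_left _ hx

lemma single_mem' {I : Ideal (∀ i, R i)} {i : Fin m} {x : ∀ j, R j} (hx : x ∈ I) :
    Pi.single i (x i) ∈ I := by
  have := single_mem hx (1 : R i)
  rwa [one_mul] at this

lemma map_eq_bot_iff' {I : Ideal (∀ i, R i)} {i : Fin m} :
    I.map (Pi.evalRingHom R i) = ⊥ ↔ ∀ x ∈ I, x i = 0 := by
  rw [Ideal.map_eq_bot_iff_le_ker]
  exact ⟨fun h x hx => h hx, fun h x hx => h x hx⟩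

lemma map_ne_bot_iff {I : Ideal (∀ i, R i)} {i : Fin m} :
    I.map (Pi.evalRingHom R i) ≠ ⊥ ↔ ∃ x ∈ I, x i ≠ 0 := by
  rw [Ne, map_eq_bot_iff']
  push_neg
  rfl

lemma mem_of_proj {I : Ideal (∀ i, R i)} {x : ∀ i, R i}
    (h : ∀ i, x i ∈ I.map (Pi.evalRingHom R i)) : x ∈ I := by
  rw [← Finset.univ_sum_single x]
  refine Ideal.sum_mem _ fun i _ => ?_
  obtain ⟨y, hy, hyi⟩ := mem_map_iff.mp (h i)
  have := single_mem' (i := i) hy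
  rwa [hyi] at this

variable [∀ i, IsArtinianRing (R i)] [∀ i, IsLocalRing (R i)] [∀ i, IsPrincipalIdealRing (R i)]

lemma inf_ne_bot {I J : Ideal (∀ i, R i)} {i : Fin m}
    (hI : I.map (Pi.evalRingHom R i) ≠ ⊥) (hJ : J.map (Pi.evalRingHom R i) ≠ ⊥) :
    I ⊓ J ≠ ⊥ := by
  obtain ⟨x, hxI, hx⟩ := map_ne_bot_iff.mp hI
  obtain ⟨y, hyJ, hy⟩ := map_ne_bot_iff.mp hJ
  intro hbot
  rcases chain_dvd_or_dvd (x i) (y i) with ⟨c, hc⟩ | ⟨c, hc⟩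
  · -- y i = x i * c
    have h1 : Pi.single i (y i) ∈ I := by
      have := single_mem hxI c
      rwa [mul_comm, ← hc] at this
    have h2 : Pi.single i (y i) ∈ J := single_mem' hyJ
    have : Pi.single i (y i) ∈ I ⊓ J := ⟨h1, h2⟩
    rw [hbot, Ideal.mem_bot] at this
    exact hy (by simpa using congrFun this i)
  · have h1 : Pi.single i (x i) ∈ J := by
      have := single_mem hyJ c
      rwa [mul_comm, ← hc] at this
    have h2 : Pi.single i (x i) ∈ I := single_mem' hxI
    have : Pi.single i (x i) ∈ I ⊓ J := ⟨h2, h1⟩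
    rw [hbot, Ideal.mem_bot] at this
    exact hx (by simpa using congrFun this i)

end Prod

section IdealOfPi
variable {m : ℕ} {R : Fin m → Type*} [∀ i, CommRing (R i)]

/-- The ideal of the product ring determined by a family of component ideals. -/
def idealOfPi (f : ∀ i, Ideal (R i)) : Ideal (∀ i, R i) where
  carrier := {x | ∀ i, x i ∈ f i}
  zero_mem' := fun i => (f i).zero_mem
  add_mem' := fun hx hy i => (f i).add_mem (hx i) (hy i)
  smul_mem' := fun c x hx i => by simpa using (f i).mul_mem_left (c i) (hx i)

lemma mem_idealOfPi {f : ∀ i, Ideal (R i)} {x : ∀ i, R i} :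
    x ∈ idealOfPi f ↔ ∀ i, x i ∈ f i := Iff.rfl

lemma single_mem_idealOfPi {f : ∀ i, Ideal (R i)} {i : Fin m} {a : R i} (ha : a ∈ f i) :
    Pi.single i a ∈ idealOfPi f := by
  intro j
  by_cases h : j = i
  · subst h; simpa using ha
  · simp [Pi.single_apply, h, (f j).zero_mem]

lemma map_idealOfPi (f : ∀ i, Ideal (R i)) (i : Fin m) :
    (idealOfPi f).map (Pi.evalRingHom R i) = f i := by
  apply le_antisymm
  · intro a ha
    obtain ⟨x, hx, rfl⟩ := mem_map_iff.mp ha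
    exact hx i
  · intro a ha
    exact mem_map_iff.mpr ⟨Pi.single i a, single_mem_idealOfPi ha, Pi.single_eq_same i a⟩

lemma idealOfPi_map (I : Ideal (∀ i, R i)) :
    idealOfPi (fun i => I.map (Pi.evalRingHom R i)) = I := by
  ext x
  exact ⟨fun h => mem_of_proj h, fun h i => Ideal.mem_map_of_mem _ h⟩

lemma idealOfPi_top : idealOfPi (fun i => (⊤ : Ideal (R i))) = ⊤ :=
  eq_top_iff.mpr fun x _ i => trivial

end IdealOfPi

theorem statement10 (m : ℕ) (hm : 2 ≤ m) (R : Fin m → Type*) [∀ i, CommRing (R i)]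
    [∀ i, IsArtinianRing (R i)] [∀ i, IsLocalRing (R i)] [∀ i, IsPrincipalIdealRing (R i)]
    (hnf : ∀ i, ¬ IsField (R i))
    (nn : Fin m → ℕ)
    (hfin : ∀ i, {K : Ideal (R i) | K ≠ ⊥ ∧ K ≠ ⊤}.Finite)
    (hcard : ∀ i, {K : Ideal (R i) | K ≠ ⊥ ∧ K ≠ ⊤}.ncard = nn i)
    (A0 : Set (NontrivialIdeal (∀ i, R i)))
    (hA0 : A0 = {I | ∀ i, I.1.map (Pi.evalRingHom R i) ≠ ⊥}) :
    A0.Finite ∧ A0.ncard = (∏ i, (nn i + 1)) - 1 ∧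
      (∀ I ∈ A0, ∀ J ∈ A0, I ≠ J →
        MutuallyMaximallyDistant (intersectionGraph (∀ i, R i)) I J) ∧
      (∀ I ∈ A0, ∀ J ∉ A0,
        ¬ MutuallyMaximallyDistant (intersectionGraph (∀ i, R i)) I J) := by
  subst hA0
  haveI : Nonempty (Fin m) := ⟨⟨0, by omega⟩⟩
  set P := ∀ i, R i with hP
  set A0 : Set (NontrivialIdeal P) :=
    {I | ∀ i, I.1.map (Pi.evalRingHom R i) ≠ ⊥} with hA0
  -- every member of A0 is adjacent to every other vertex
  have hadj : ∀ I ∈ A0, ∀ J : NontrivialIdeal P, J ≠ I →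
      (intersectionGraph P).Adj I J := by
    intro I hI J hJI
    refine (⟨fun h => hJI h.symm, ?_⟩ : I ≠ J ∧ I.1 ⊓ J.1 ≠ ⊥)
    obtain ⟨x, hxJ, hx⟩ := Submodule.exists_mem_ne_zero_of_ne_bot J.2.1
    obtain ⟨i, hxi⟩ := Function.ne_iff.mp hx
    have hJi : J.1.map (Pi.evalRingHom R i) ≠ ⊥ := map_ne_bot_iff.mpr ⟨x, hxJ, hxi⟩
    exact inf_ne_bot (hI i) hJi
  have hd1 : ∀ I ∈ A0, ∀ J : NontrivialIdeal P, J ≠ I →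
      (intersectionGraph P).edist I J = 1 := fun I hI J hJI =>
    edist_eq_one_iff_adj.mpr (hadj I hI J hJI)
  have hle1 : ∀ I ∈ A0, ∀ w : NontrivialIdeal P, (intersectionGraph P).edist I w ≤ 1 := by
    intro I hI w
    by_cases h : w = I
    · subst h; simp [SimpleGraph.edist_self]
    · exact le_of_eq (hd1 I hI w h)
  -- the MMD claims
  have hmmd : ∀ I ∈ A0, ∀ J ∈ A0, I ≠ J →
      MutuallyMaximallyDistant (intersectionGraph P) I J := by
    intro I hI J hJ hIJ
    refine ⟨hIJ, fun w _ => ?_, fun w _ => ?_⟩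
    · rw [hd1 I hI J (Ne.symm hIJ)]; exact hle1 J hJ w
    · rw [hd1 I hI J (Ne.symm hIJ)]; exact hle1 I hI w
  have hnmmd : ∀ I ∈ A0, ∀ J ∉ A0,
      ¬ MutuallyMaximallyDistant (intersectionGraph P) I J := by
    intro I hI J hJ hMMD
    have hJI : J ≠ I := fun h => hJ (h ▸ hI)
    obtain ⟨i0, hi0⟩ : ∃ i, J.1.map (Pi.evalRingHom R i) = ⊥ := by
      by_contra h
      push_neg at h
      exact hJ h
    -- the complementary ideal
    set W0 : Ideal P := complIdeal R J.1 with hW0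
    have hmemW0 : ∀ x : P, x ∈ W0 ↔
        ∀ i, J.1.map (Pi.evalRingHom R i) ≠ ⊥ → x i = 0 := fun x => Iff.rfl
    have hsingle : Pi.single i0 (1 : R i0) ∈ W0 := by
      rw [hmemW0]
      intro i hi
      rcases eq_or_ne i i0 with rfl | hne
      · exact absurd hi0 hi
      · exact Pi.single_eq_of_ne hne 1
    have hW0bot : W0 ≠ ⊥ := by
      intro h
      rw [h, Ideal.mem_bot] at hsingle
      have := congrFun hsingle i0
      simp at this
    obtain ⟨x1, hx1J, hx1⟩ := Submodule.exists_mem_ne_zero_of_ne_bot J.2.1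
    obtain ⟨i1, hxi1⟩ := Function.ne_iff.mp hx1
    have hJi1 : J.1.map (Pi.evalRingHom R i1) ≠ ⊥ := map_ne_bot_iff.mpr ⟨x1, hx1J, hxi1⟩
    have hW0top : W0 ≠ ⊤ := by
      rw [Ideal.ne_top_iff_one]
      intro h
      rw [hmemW0] at h
      exact one_ne_zero (h i1 hJi1)
    set W : NontrivialIdeal P := ⟨W0, hW0bot, hW0top⟩ with hW
    have hWI : W ≠ I := by
      intro h
      apply hI i1
      rw [← h]
      exact map_eq_bot_iff'.mpr fun x hx => (hmemW0 x).mp hx i1 hJi1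
    have hAdjIW : (intersectionGraph P).Adj I W := hadj I hI W hWI
    have hJW : J ≠ W := by
      intro h
      have : Pi.single i0 (1 : R i0) ∈ J.1 := by rw [h]; exact hsingle
      have := map_eq_bot_iff'.mp hi0 _ this
      simp at this
    have hnadjJW : ¬ (intersectionGraph P).Adj J W := by
      show ¬ (J ≠ W ∧ J.1 ⊓ W.1 ≠ ⊥)
      rintro ⟨-, hinf⟩
      apply hinf
      rw [eq_bot_iff]
      rintro x ⟨hxJ, hxW⟩
      have hxW' := (hmemW0 x).mp hxW
      funext i
      by_cases h : J.1.map (Pi.evalRingHom R i) = ⊥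
      · exact map_eq_bot_iff'.mp h x hxJ
      · exact hxW' i h
    have hb := hMMD.2.1 W hAdjIW
    rw [hd1 I hI J hJI] at hb
    have h0 : (intersectionGraph P).edist J W ≠ 1 := fun h =>
      hnadjJW (edist_eq_one_iff_adj.mp h)
    have h1 : (intersectionGraph P).edist J W = 0 :=
      ENat.lt_one_iff_eq_zero.mp (lt_of_le_of_ne hb h0)
    exact hJW (edist_eq_zero_iff.mp h1)
  -- counting
  haveI instK : ∀ i, Finite {K : Ideal (R i) // K ≠ ⊥} := by
    intro i
    have hsub : {K : Ideal (R i) | K ≠ ⊥} ⊆ insert ⊤ {K | K ≠ ⊥ ∧ K ≠ ⊤} := by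
      intro K hK
      by_cases h : K = ⊤
      · exact Set.mem_insert_iff.mpr (Or.inl h)
      · exact Set.mem_insert_iff.mpr (Or.inr ⟨hK, h⟩)
    exact (((hfin i).insert ⊤).subset hsub).to_subtype
  have htopbot : ∀ i, (⊤ : Ideal (R i)) ≠ ⊥ := by
    intro i h
    have : (1 : R i) ∈ (⊥ : Ideal (R i)) := h ▸ Submodule.mem_top
    exact one_ne_zero ((Ideal.mem_bot).mp this)
  set Big := ∀ i, {K : Ideal (R i) // K ≠ ⊥} with hBig
  set pt : Big := fun i => ⟨⊤, htopbot i⟩ with hpt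
  haveI : Finite Big := Pi.finite
  -- the equivalence A0 ≃ {x : Big // x ≠ pt}
  have e : A0 ≃ {x : Big // x ≠ pt} := by
    refine
      { toFun := fun I => ⟨fun i => ⟨I.1.1.map (Pi.evalRingHom R i), I.2 i⟩, ?_⟩
        invFun := fun x => ⟨⟨idealOfPi (fun i => (x.1 i).1), ?_, ?_⟩, ?_⟩
        left_inv := ?_
        right_inv := ?_ }
    · intro h
      apply I.1.2.2
      have hmap : ∀ i, I.1.1.map (Pi.evalRingHom R i) = ⊤ := fun i =>
        congrArg Subtype.val (congrFun h i)
      rw [← idealOfPi_map I.1.1]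
      have : (fun i => I.1.1.map (Pi.evalRingHom R i)) = fun i => (⊤ : Ideal (R i)) :=
        funext hmap
      rw [this, idealOfPi_top]
    · -- ≠ ⊥
      intro h
      obtain ⟨a, ha, ha0⟩ :=
        Submodule.exists_mem_ne_zero_of_ne_bot (x.1 (Classical.arbitrary (Fin m))).2
      have := single_mem_idealOfPi (f := fun i => (x.1 i).1) ha
      rw [h, Ideal.mem_bot] at this
      exact ha0 (by simpa using congrFun this (Classical.arbitrary (Fin m)))
    · -- ≠ ⊤
      intro h
      obtain ⟨i, hi⟩ := Function.ne_iff.mp x.2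
      have hi' : (x.1 i).1 ≠ ⊤ := fun hh => hi (Subtype.ext hh)
      have : (1 : P) ∈ idealOfPi (fun i => (x.1 i).1) := h ▸ Submodule.mem_top
      exact (Ideal.ne_top_iff_one _).mp hi' (this i)
    · intro i
      rw [map_idealOfPi]
      exact (x.1 i).2
    · intro I
      apply Subtype.ext
      apply Subtype.ext
      exact idealOfPi_map I.1.1
    · intro x
      apply Subtype.ext
      funext i
      exact Subtype.ext (map_idealOfPi _ i)
  haveI : Finite A0 := Finite.of_equiv _ e.symm
  have hA0fin : A0.Finite := Set.finite_coe_iff.mp ‹_›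
  have h1 : ∀ i, Nat.card {K : Ideal (R i) // K ≠ ⊥} = nn i + 1 := by
    intro i
    have hseteq : {K : Ideal (R i) | K ≠ ⊥} = insert ⊤ {K | K ≠ ⊥ ∧ K ≠ ⊤} := by
      ext K
      simp only [Set.mem_setOf_eq, Set.mem_insert_iff]
      constructor
      · intro h
        by_cases hh : K = ⊤
        · exact Or.inl hh
        · exact Or.inr ⟨h, hh⟩
      · rintro (rfl | ⟨h, -⟩)
        · exact htopbot i
        · exact h
    have : Nat.card {K : Ideal (R i) // K ≠ ⊥} = {K : Ideal (R i) | K ≠ ⊥}.ncard :=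
      Nat.card_coe_set_eq _
    rw [this, hseteq, Set.ncard_insert_of_notMem (fun h => h.2 rfl) (hfin i), hcard i]
  have h2 : Nat.card Big = ∏ i, (nn i + 1) := by
    rw [Nat.card_pi]
    exact Finset.prod_congr rfl fun i _ => h1 i
  have h3 : Nat.card {x : Big // x ≠ pt} = Nat.card Big - 1 := by
    have he : Nat.card {x : Big // x ≠ pt} = ({pt}ᶜ : Set Big).ncard := by
      rw [← Nat.card_coe_set_eq]
      exact Nat.card_congr (Equiv.subtypeEquivRight (fun x => by simp))
    have huniv : (Set.univ : Set Big) = insert pt ({pt}ᶜ : Set Big) := by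
      ext x
      by_cases h : x = pt <;> simp [h]
    have : Nat.card Big = ({pt}ᶜ : Set Big).ncard + 1 := by
      rw [← Set.ncard_univ, huniv,
        Set.ncard_insert_of_notMem (by simp) (Set.toFinite _)]
    omega
  have hcardA0 : A0.ncard = (∏ i, (nn i + 1)) - 1 := by
    rw [← Nat.card_coe_set_eq, Nat.card_congr e, h3, h2]
  exact ⟨hA0fin, hcardA0, hmmd, hnmmd⟩
end
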